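/- arXiv:1006.0329 — 2 statements merged into one kernel-verified Lean document; each statement's English description precedes it below -/
import Mathlib

section
/- Let N = 2M+1, M ≥ 1, ρ > 0, R_0 > 0, and S = T_θ^T S_{R_0} as above. Then S^T S = (N/2)·diag(2, (R_0/ρ)², (R_0/ρ)², ..., (R_0/ρ)^{2M}, (R_0/ρ)^{2M}), and consequently ‖S‖₂² = (N/2)·max{2, (R_0/ρ)², (R_0/ρ)^{2M}} and ‖S^{-1}‖₂² = [(N/2)·min{2, (R_0/ρ)², (R_0/ρ)^{2M}}]^{-1}. -/
open Matrix
open scoped Matrix.Norms.L2Operator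

noncomputable section

/-- Equispaced collocation angles `θ_j = 2π(j-1)/N` (0-based: `θ_j = 2πj/N`). -/
def theta (N : ℕ) (j : Fin N) : ℝ := 2 * Real.pi * j / N

/-- The trigonometric collocation matrix `T_θ ∈ ℝ^{(2M+1)×(2M+1)}`:
row `1` (index 0) is all ones, row `2k` is `cos(kθ_j)`, row `2k+1` is `sin(kθ_j)`.
In 0-based indexing, the frequency of row `i ≥ 1` is `k = (i+1)/2`. -/
def Ttheta (M : ℕ) : Matrix (Fin (2*M+1)) (Fin (2*M+1)) ℝ := fun i j =>
  if i.val = 0 then 1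
  else if i.val % 2 = 1 then Real.cos ((((i.val+1)/2 : ℕ) : ℝ) * theta (2*M+1) j)
  else Real.sin ((((i.val+1)/2 : ℕ) : ℝ) * theta (2*M+1) j)

/-- The diagonal matrix `S_{R₀} = diag(1, (R₀/ρ), (R₀/ρ), …, (R₀/ρ)^M, (R₀/ρ)^M)`:
the diagonal entry at (0-based) index `i ≥ 1` is `(R₀/ρ)^k` with `k = (i+1)/2`. -/
def SR (M : ℕ) (ρ R₀ : ℝ) : Matrix (Fin (2*M+1)) (Fin (2*M+1)) ℝ :=
  Matrix.diagonal (fun i : Fin (2*M+1) =>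
    if i.val = 0 then 1 else (R₀ / ρ) ^ ((i.val+1)/2 : ℕ))

lemma sum_exp_eq_zero {N k : ℕ} (hk : 0 < k) (hkN : k < N) :
    ∑ j : Fin N, Complex.exp (((2 * Real.pi * k / N : ℝ) : ℂ) * Complex.I) ^ (j : ℕ) = 0 := by
  have hN : 0 < N := lt_trans hk hkN
  have hNc : (N : ℂ) ≠ 0 := Nat.cast_ne_zero.mpr hN.ne'
  have hπI : ((2 : ℂ) * Real.pi * Complex.I) ≠ 0 := by
    simp [Complex.I_ne_zero, Real.pi_ne_zero, Complex.ofReal_ne_zero]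
  set z : ℂ := Complex.exp (((2 * Real.pi * k / N : ℝ) : ℂ) * Complex.I) with hz
  have hzN : z ^ N = 1 := by
    rw [hz, ← Complex.exp_nat_mul]
    have : (N : ℂ) * (((2 * Real.pi * k / N : ℝ) : ℂ) * Complex.I) = (k : ℂ) * (2 * Real.pi * Complex.I) := by
      push_cast
      field_simp
    rw [this]
    exact_mod_cast Complex.exp_int_mul_two_pi_mul_I (k : ℤ)
  have hz1 : z ≠ 1 := by
    intro h
    rw [hz, Complex.exp_eq_one_iff] at h
    obtain ⟨n, hn⟩ := h
    have h2 : (k : ℂ) * (2 * Real.pi * Complex.I) = ((n * N : ℤ) : ℂ) * (2 * Real.pi * Complex.I) := by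
      have hn' : ((2 * Real.pi * k / N : ℝ) : ℂ) * Complex.I * N = (n : ℂ) * (2 * Real.pi * Complex.I) * N := by
        rw [hn]
      push_cast at hn' ⊢
      field_simp at hn'
      linear_combination (2 * (Real.pi : ℂ) * Complex.I) * hn'
    have h3 : ((k : ℤ) : ℂ) = ((n * N : ℤ) : ℂ) := by
      have := mul_right_cancel₀ hπI h2
      exact_mod_cast this
    have hkz : (k : ℤ) = n * N := by exact_mod_cast h3
    rcases lt_trichotomy n 0 with h' | h' | h'
    · nlinarith [hkz, (show (0:ℤ) < k by exact_mod_cast hk), (show (0:ℤ) < N by exact_mod_cast hN)]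
    · simp [h'] at hkz; omega
    · have : (1:ℤ) ≤ n := h'
      nlinarith [hkz, (show (k:ℤ) < N by exact_mod_cast hkN), (show (0:ℤ) < N by exact_mod_cast hN)]
  rw [Fin.sum_univ_eq_sum_range, geom_sum_eq hz1, hzN]
  simp

lemma sum_trig_eq_zero {N k : ℕ} (hk : 0 < k) (hkN : k < N) :
    (∑ j : Fin N, Real.cos (k * theta N j) = 0) ∧
    (∑ j : Fin N, Real.sin (k * theta N j) = 0) := by
  have h := sum_exp_eq_zero hk hkN
  have he : ∀ j : Fin N, (Complex.exp (((2 * Real.pi * k / N : ℝ) : ℂ) * Complex.I)) ^ (j:ℕ)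
      = Complex.exp ((((k : ℝ) * theta N j : ℝ) : ℂ) * Complex.I) := by
    intro j
    rw [← Complex.exp_nat_mul]
    congr 1
    push_cast
    unfold theta
    push_cast
    ring
  rw [Finset.sum_congr rfl (fun j _ => he j)] at h
  constructor
  · have := congrArg Complex.re h
    rw [Complex.re_sum, Complex.zero_re] at this
    rw [← this]
    refine Finset.sum_congr rfl fun j _ => ?_
    rw [show (((k : ℝ) * theta N j : ℝ) : ℂ) = (((k : ℝ) * theta N j : ℝ) : ℂ) from rfl,
      Complex.exp_ofReal_mul_I_re]
  · have := congrArg Complex.im h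
    rw [Complex.im_sum, Complex.zero_im] at this
    rw [← this]
    refine Finset.sum_congr rfl fun j _ => ?_
    rw [Complex.exp_ofReal_mul_I_im]

lemma sum_cos_nat {N : ℕ} (hN : 0 < N) (k : ℕ) (hkN : k < N) :
    ∑ j : Fin N, Real.cos (k * theta N j) = if k = 0 then (N:ℝ) else 0 := by
  rcases Nat.eq_zero_or_pos k with h | h
  · simp [h]
  · rw [if_neg h.ne', (sum_trig_eq_zero h hkN).1]

lemma sum_sin_nat {N : ℕ} (k : ℕ) (hkN : k < N) :
    ∑ j : Fin N, Real.sin (k * theta N j) = 0 := by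
  rcases Nat.eq_zero_or_pos k with h | h
  · simp [h]
  · exact (sum_trig_eq_zero h hkN).2

lemma sum_cos_sub {N : ℕ} (hN : 0 < N) (a b : ℕ) (ha : a < N) (hb : b < N) :
    ∑ j : Fin N, Real.cos (((a:ℝ) - b) * theta N j) = if a = b then (N:ℝ) else 0 := by
  rcases lt_trichotomy a b with h | h | h
  · rw [if_neg h.ne]
    have : ∀ j : Fin N, Real.cos (((a:ℝ) - b) * theta N j)
        = Real.cos (((b - a : ℕ):ℝ) * theta N j) := by
      intro j
      rw [← Real.cos_neg (((a:ℝ) - b) * theta N j)]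
      congr 1
      push_cast [Nat.cast_sub h.le]
      ring
    rw [Finset.sum_congr rfl (fun j _ => this j)]
    exact (sum_trig_eq_zero (by omega) (by omega)).1
  · simp [h]
  · rw [if_neg h.ne']
    have : ∀ j : Fin N, Real.cos (((a:ℝ) - b) * theta N j)
        = Real.cos (((a - b : ℕ):ℝ) * theta N j) := by
      intro j
      congr 1
      push_cast [Nat.cast_sub h.le]
      ring
    rw [Finset.sum_congr rfl (fun j _ => this j)]
    exact (sum_trig_eq_zero (by omega) (by omega)).1

lemma sum_sin_sub {N : ℕ} (a b : ℕ) (ha : a < N) (hb : b < N) :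
    ∑ j : Fin N, Real.sin (((a:ℝ) - b) * theta N j) = 0 := by
  rcases lt_trichotomy a b with h | h | h
  · have : ∀ j : Fin N, Real.sin (((a:ℝ) - b) * theta N j)
        = - Real.sin (((b - a : ℕ):ℝ) * theta N j) := by
      intro j
      rw [← Real.sin_neg]
      congr 1
      push_cast [Nat.cast_sub h.le]
      ring
    rw [Finset.sum_congr rfl (fun j _ => this j), Finset.sum_neg_distrib,
      sum_sin_nat (b-a) (by omega)]
    simp
  · simp [h]
  · have : ∀ j : Fin N, Real.sin (((a:ℝ) - b) * theta N j)
        = Real.sin (((a - b : ℕ):ℝ) * theta N j) := by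
      intro j
      congr 1
      push_cast [Nat.cast_sub h.le]
      ring
    rw [Finset.sum_congr rfl (fun j _ => this j)]
    exact sum_sin_nat (a-b) (by omega)

lemma sum_cos_cos {N : ℕ} (hN : 0 < N) (p q : ℕ) (hp : 0 < p) (hq : 0 < q)
    (hpq : p + q < N) :
    ∑ j : Fin N, Real.cos (p * theta N j) * Real.cos (q * theta N j)
      = if p = q then (N:ℝ)/2 else 0 := by
  have key : ∀ j : Fin N, Real.cos (p * theta N j) * Real.cos (q * theta N j)
      = (Real.cos (((p:ℝ) - q) * theta N j) + Real.cos (((p+q:ℕ):ℝ) * theta N j)) / 2 := by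
    intro j
    rw [show ((p:ℝ) - q) * theta N j = (p:ℝ) * theta N j - q * theta N j by ring,
      show (((p+q:ℕ):ℝ)) * theta N j = (p:ℝ) * theta N j + q * theta N j by push_cast; ring,
      Real.cos_sub, Real.cos_add]
    ring
  rw [Finset.sum_congr rfl fun j _ => key j, ← Finset.sum_div, Finset.sum_add_distrib,
    sum_cos_sub hN p q (by omega) (by omega), sum_cos_nat hN (p+q) hpq,
    if_neg (by omega : ¬ p + q = 0)]
  split <;> ring

lemma sum_sin_sin {N : ℕ} (hN : 0 < N) (p q : ℕ) (hp : 0 < p) (hq : 0 < q)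
    (hpq : p + q < N) :
    ∑ j : Fin N, Real.sin (p * theta N j) * Real.sin (q * theta N j)
      = if p = q then (N:ℝ)/2 else 0 := by
  have key : ∀ j : Fin N, Real.sin (p * theta N j) * Real.sin (q * theta N j)
      = (Real.cos (((p:ℝ) - q) * theta N j) - Real.cos (((p+q:ℕ):ℝ) * theta N j)) / 2 := by
    intro j
    rw [show ((p:ℝ) - q) * theta N j = (p:ℝ) * theta N j - q * theta N j by ring,
      show (((p+q:ℕ):ℝ)) * theta N j = (p:ℝ) * theta N j + q * theta N j by push_cast; ring,
      Real.cos_sub, Real.cos_add]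
    ring
  rw [Finset.sum_congr rfl fun j _ => key j, ← Finset.sum_div, Finset.sum_sub_distrib,
    sum_cos_sub hN p q (by omega) (by omega), sum_cos_nat hN (p+q) hpq,
    if_neg (by omega : ¬ p + q = 0)]
  split <;> ring

lemma sum_sin_cos {N : ℕ} (p q : ℕ) (hp : p < N) (hq : q < N) (hpq : p + q < N) :
    ∑ j : Fin N, Real.sin (p * theta N j) * Real.cos (q * theta N j) = 0 := by
  have key : ∀ j : Fin N, Real.sin (p * theta N j) * Real.cos (q * theta N j)
      = (Real.sin (((p:ℝ) - q) * theta N j) + Real.sin (((p+q:ℕ):ℝ) * theta N j)) / 2 := by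
    intro j
    rw [show ((p:ℝ) - q) * theta N j = (p:ℝ) * theta N j - q * theta N j by ring,
      show (((p+q:ℕ):ℝ)) * theta N j = (p:ℝ) * theta N j + q * theta N j by push_cast; ring,
      Real.sin_sub, Real.sin_add]
    ring
  rw [Finset.sum_congr rfl fun j _ => key j, ← Finset.sum_div, Finset.sum_add_distrib,
    sum_sin_sub p q hp hq, sum_sin_nat (p+q) hpq]
  norm_num

lemma TTt (M : ℕ) : Ttheta M * (Ttheta M)ᵀ =
    (((2*M+1:ℕ):ℝ)/2) • Matrix.diagonal
      (fun i : Fin (2*M+1) => if i.val = 0 then 2 else 1) := by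
  have hN : 0 < 2*M+1 := by omega
  ext i k
  rw [Matrix.mul_apply, Matrix.smul_apply, Matrix.diagonal_apply, smul_eq_mul]
  simp only [Matrix.transpose_apply]
  have hi2 : i.val < 2*M+1 := i.isLt
  have hk2 : k.val < 2*M+1 := k.isLt
  by_cases hi : i.val = 0
  · by_cases hk : k.val = 0
    · have hik : i = k := Fin.ext (by omega)
      rw [if_pos hik, if_pos hi]
      have : ∀ j : Fin (2*M+1), Ttheta M i j * Ttheta M k j = 1 := by
        intro j; simp [Ttheta, hi, hk]
      rw [Finset.sum_congr rfl fun j _ => this j]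
      simp only [Finset.sum_const, Finset.card_univ, Fintype.card_fin, nsmul_eq_mul, mul_one]
      push_cast; ring
    · have hik : ¬ i = k := fun h => hk (h ▸ hi)
      rw [if_neg hik, mul_zero]
      by_cases hkp : k.val % 2 = 1
      · have : ∀ j : Fin (2*M+1), Ttheta M i j * Ttheta M k j
            = Real.cos ((((k.val+1)/2 : ℕ):ℝ) * theta (2*M+1) j) := by
          intro j; simp [Ttheta, hi, hk, hkp]
        rw [Finset.sum_congr rfl fun j _ => this j,
          sum_cos_nat hN ((k.val+1)/2) (by omega), if_neg (by omega)]
      · have : ∀ j : Fin (2*M+1), Ttheta M i j * Ttheta M k j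
            = Real.sin ((((k.val+1)/2 : ℕ):ℝ) * theta (2*M+1) j) := by
          intro j; simp [Ttheta, hi, hk, hkp]
        rw [Finset.sum_congr rfl fun j _ => this j]
        exact sum_sin_nat ((k.val+1)/2) (by omega)
  · by_cases hk : k.val = 0
    · have hik : ¬ i = k := fun h => hi (h ▸ hk)
      rw [if_neg hik, mul_zero]
      by_cases hip : i.val % 2 = 1
      · have : ∀ j : Fin (2*M+1), Ttheta M i j * Ttheta M k j
            = Real.cos ((((i.val+1)/2 : ℕ):ℝ) * theta (2*M+1) j) := by
          intro j; simp [Ttheta, hi, hk, hip]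
        rw [Finset.sum_congr rfl fun j _ => this j,
          sum_cos_nat hN ((i.val+1)/2) (by omega), if_neg (by omega)]
      · have : ∀ j : Fin (2*M+1), Ttheta M i j * Ttheta M k j
            = Real.sin ((((i.val+1)/2 : ℕ):ℝ) * theta (2*M+1) j) := by
          intro j; simp [Ttheta, hi, hk, hip]
        rw [Finset.sum_congr rfl fun j _ => this j]
        exact sum_sin_nat ((i.val+1)/2) (by omega)
    · have hp1 : 0 < (i.val+1)/2 := by omega
      have hq1 : 0 < (k.val+1)/2 := by omega
      have hpqN : (i.val+1)/2 + (k.val+1)/2 < 2*M+1 := by omega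
      by_cases hip : i.val % 2 = 1 <;> by_cases hkp : k.val % 2 = 1
      · have : ∀ j : Fin (2*M+1), Ttheta M i j * Ttheta M k j
            = Real.cos ((((i.val+1)/2 : ℕ):ℝ) * theta (2*M+1) j)
              * Real.cos ((((k.val+1)/2 : ℕ):ℝ) * theta (2*M+1) j) := by
          intro j; simp [Ttheta, hi, hk, hip, hkp]
        rw [Finset.sum_congr rfl fun j _ => this j,
          sum_cos_cos hN _ _ hp1 hq1 hpqN]
        by_cases h : i = k
        · rw [if_pos (by rw [h]), if_pos h, if_neg (by omega : ¬ i.val = 0), mul_one]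
        · rw [if_neg (fun hh => h (Fin.ext (by omega))), if_neg h, mul_zero]
      · have hik : ¬ i = k := fun h => by rw [h] at hip; exact hkp hip
        rw [if_neg hik, mul_zero]
        have : ∀ j : Fin (2*M+1), Ttheta M i j * Ttheta M k j
            = Real.sin ((((k.val+1)/2 : ℕ):ℝ) * theta (2*M+1) j)
              * Real.cos ((((i.val+1)/2 : ℕ):ℝ) * theta (2*M+1) j) := by
          intro j; simp [Ttheta, hi, hk, hip, hkp]; ring
        rw [Finset.sum_congr rfl fun j _ => this j]
        exact sum_sin_cos _ _ (by omega) (by omega) (by omega)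
      · have hik : ¬ i = k := fun h => by rw [h] at hip; exact hip hkp
        rw [if_neg hik, mul_zero]
        have : ∀ j : Fin (2*M+1), Ttheta M i j * Ttheta M k j
            = Real.sin ((((i.val+1)/2 : ℕ):ℝ) * theta (2*M+1) j)
              * Real.cos ((((k.val+1)/2 : ℕ):ℝ) * theta (2*M+1) j) := by
          intro j; simp [Ttheta, hi, hk, hip, hkp]
        rw [Finset.sum_congr rfl fun j _ => this j]
        exact sum_sin_cos _ _ (by omega) (by omega) hpqN
      · have : ∀ j : Fin (2*M+1), Ttheta M i j * Ttheta M k j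
            = Real.sin ((((i.val+1)/2 : ℕ):ℝ) * theta (2*M+1) j)
              * Real.sin ((((k.val+1)/2 : ℕ):ℝ) * theta (2*M+1) j) := by
          intro j; simp [Ttheta, hi, hk, hip, hkp]
        rw [Finset.sum_congr rfl fun j _ => this j,
          sum_sin_sin hN _ _ hp1 hq1 hpqN]
        by_cases h : i = k
        · rw [if_pos (by rw [h]), if_pos h, if_neg (by omega : ¬ i.val = 0), mul_one]
        · rw [if_neg (fun hh => h (Fin.ext (by omega))), if_neg h, mul_zero]

lemma l2_opNorm_diagonal_real {n : ℕ} (hne : (Finset.univ : Finset (Fin n)).Nonempty)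
    (v : Fin n → ℝ) :
    ‖(Matrix.diagonal v : Matrix (Fin n) (Fin n) ℝ)‖
      = Finset.univ.sup' hne (fun i => |v i|) := by
  set C := Finset.univ.sup' hne (fun i => |v i|) with hC
  obtain ⟨i0, _⟩ := hne
  have hCle : ∀ i, |v i| ≤ C := fun i => Finset.le_sup' (fun i => |v i|) (Finset.mem_univ i)
  have hC0 : 0 ≤ C := le_trans (abs_nonneg (v i0)) (hCle i0)
  apply le_antisymm
  · rw [Matrix.l2_opNorm_def]
    apply ContinuousLinearMap.opNorm_le_bound _ hC0
    intro x
    rw [LinearEquiv.trans_apply]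
    simp only [LinearMap.coe_toContinuousLinearMap']
    rw [Matrix.toEuclideanLin_apply]
    rw [EuclideanSpace.norm_eq, EuclideanSpace.norm_eq]
    have h1 : ∀ i, ‖((WithLp.equiv 2 (Fin n → ℝ)).symm
        (Matrix.diagonal v *ᵥ (WithLp.equiv 2 (Fin n → ℝ)) x)) i‖ ^ 2
        ≤ C^2 * ‖x i‖^2 := by
      intro i
      have : ((WithLp.equiv 2 (Fin n → ℝ)).symm
          (Matrix.diagonal v *ᵥ (WithLp.equiv 2 (Fin n → ℝ)) x)) i
          = v i * x i := by
        simp [Matrix.mulVec_diagonal]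
      rw [this]
      have := hCle i
      rw [Real.norm_eq_abs, Real.norm_eq_abs, abs_mul, mul_pow]
      exact mul_le_mul_of_nonneg_right (pow_le_pow_left₀ (abs_nonneg _) this 2) (sq_nonneg _)
    calc Real.sqrt (∑ i, ‖((WithLp.equiv 2 (Fin n → ℝ)).symm
          (Matrix.diagonal v *ᵥ (WithLp.equiv 2 (Fin n → ℝ)) x)) i‖ ^ 2)
        ≤ Real.sqrt (∑ i, C^2 * ‖x i‖^2) :=
          Real.sqrt_le_sqrt (Finset.sum_le_sum fun i _ => h1 i)
      _ = C * Real.sqrt (∑ i, ‖x i‖^2) := by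
          rw [← Finset.mul_sum, Real.sqrt_mul (sq_nonneg C), Real.sqrt_sq hC0]
  · apply Finset.sup'_le
    intro i _
    have key := Matrix.l2_opNorm_mulVec (Matrix.diagonal v) (EuclideanSpace.single i (1:ℝ))
    rw [EuclideanSpace.norm_single, norm_one, mul_one] at key
    have h2 : ((EuclideanSpace.equiv (Fin n) ℝ).symm
        (Matrix.diagonal v *ᵥ (EuclideanSpace.single i (1:ℝ))) : EuclideanSpace ℝ (Fin n))
        = EuclideanSpace.single i (v i) := by
      ext j
      by_cases hji : j = i
      · subst hji
        simp [Matrix.mulVec_diagonal, EuclideanSpace.single_apply]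
      · simp [Matrix.mulVec_diagonal, EuclideanSpace.single_apply, hji]
    rw [h2, EuclideanSpace.norm_single, Real.norm_eq_abs] at key
    exact key


lemma entry_le_max (M : ℕ) (hM : 1 ≤ M) (q : ℝ) (hq : 0 < q) (i : Fin (2*M+1)) :
    (if i.val = 0 then (2:ℝ) else q^(2*((i.val+1)/2))) ≤ max 2 (max (q^2) (q^(2*M))) := by
  by_cases hi : i.val = 0
  · rw [if_pos hi]; exact le_max_left _ _
  · rw [if_neg hi]
    have hp1 : 1 ≤ (i.val+1)/2 := by omega
    have hpM : (i.val+1)/2 ≤ M := by have := i.isLt; omega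
    rcases le_total 1 q with h | h
    · exact le_trans (pow_le_pow_right₀ h (by omega)) (le_trans (le_max_right _ _) (le_max_right _ _))
    · exact le_trans (pow_le_pow_of_le_one hq.le h (by omega))
        (le_trans (le_max_left _ _) (le_max_right _ _))

lemma min_le_entry (M : ℕ) (hM : 1 ≤ M) (q : ℝ) (hq : 0 < q) (i : Fin (2*M+1)) :
    min 2 (min (q^2) (q^(2*M))) ≤ (if i.val = 0 then (2:ℝ) else q^(2*((i.val+1)/2))) := by
  by_cases hi : i.val = 0
  · rw [if_pos hi]; exact min_le_left _ _
  · rw [if_neg hi]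
    have hp1 : 1 ≤ (i.val+1)/2 := by omega
    have hpM : (i.val+1)/2 ≤ M := by have := i.isLt; omega
    rcases le_total 1 q with h | h
    · exact le_trans (le_trans (min_le_right _ _) (min_le_left _ _))
        (pow_le_pow_right₀ h (by omega))
    · exact le_trans (le_trans (min_le_right _ _) (min_le_right _ _))
        (pow_le_pow_of_le_one hq.le h (by omega))

lemma exists_entry_eq (M : ℕ) (hM : 1 ≤ M) (q : ℝ) (x : ℝ)
    (hx : x = 2 ∨ x = q^2 ∨ x = q^(2*M)) :
    ∃ i : Fin (2*M+1), (if i.val = 0 then (2:ℝ) else q^(2*((i.val+1)/2))) = x := by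
  rcases hx with h | h | h
  · exact ⟨⟨0, by omega⟩, by simp [h]⟩
  · refine ⟨⟨1, by omega⟩, ?_⟩
    norm_num [h]
  · refine ⟨⟨2*M-1, by omega⟩, ?_⟩
    have h1 : ((⟨2*M-1, by omega⟩ : Fin (2*M+1)) : ℕ) = 2*M-1 := rfl
    rw [if_neg (by rw [h1]; omega), h, h1]
    congr 1
    omega

lemma entry_pos (M : ℕ) (q : ℝ) (hq : 0 < q) (i : Fin (2*M+1)) :
    (0:ℝ) < (if i.val = 0 then (2:ℝ) else q^(2*((i.val+1)/2))) := by
  by_cases hi : i.val = 0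
  · rw [if_pos hi]; norm_num
  · rw [if_neg hi]; positivity

/-- For `S = T_θᵀ S_{R₀}`: `SᵀS = (N/2)·diag(2, (R₀/ρ)², (R₀/ρ)², …, (R₀/ρ)^{2M}, (R₀/ρ)^{2M})`,
hence `‖S‖₂² = (N/2)·max{2, (R₀/ρ)², (R₀/ρ)^{2M}}` and
`‖S⁻¹‖₂² = [(N/2)·min{2, (R₀/ρ)², (R₀/ρ)^{2M}}]⁻¹`. -/
theorem S_transpose_mul_and_norms (M : ℕ) (hM : 1 ≤ M) (ρ R₀ : ℝ)
    (hρ : 0 < ρ) (hR₀ : 0 < R₀) :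
    ((Ttheta M)ᵀ * SR M ρ R₀)ᵀ * ((Ttheta M)ᵀ * SR M ρ R₀) =
      (((2*M+1 : ℕ) : ℝ) / 2) •
        Matrix.diagonal (fun i : Fin (2*M+1) =>
          if i.val = 0 then 2 else (R₀ / ρ) ^ (2 * ((i.val+1)/2 : ℕ))) ∧
    ‖(Ttheta M)ᵀ * SR M ρ R₀‖ ^ 2 =
      (((2*M+1 : ℕ) : ℝ) / 2) * max 2 (max ((R₀/ρ) ^ 2) ((R₀/ρ) ^ (2*M))) ∧
    ‖((Ttheta M)ᵀ * SR M ρ R₀)⁻¹‖ ^ 2 =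
      ((((2*M+1 : ℕ) : ℝ) / 2) * min 2 (min ((R₀/ρ) ^ 2) ((R₀/ρ) ^ (2*M))))⁻¹ := by
  have hq : 0 < R₀ / ρ := div_pos hR₀ hρ
  set q : ℝ := R₀ / ρ with hqdef
  set S := (Ttheta M)ᵀ * SR M ρ R₀ with hSdef
  set v : Fin (2*M+1) → ℝ := fun i => if i.val = 0 then 2 else q ^ (2 * ((i.val+1)/2 : ℕ)) with hv
  have hN2 : (0:ℝ) < ((2*M+1:ℕ):ℝ)/2 := by positivity
  set c : ℝ := ((2*M+1:ℕ):ℝ)/2 with hc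
  have hne : (Finset.univ : Finset (Fin (2*M+1))).Nonempty := ⟨⟨0, by omega⟩, Finset.mem_univ _⟩
  have hvpos : ∀ i, 0 < v i := fun i => entry_pos M q hq i
  have hconj : ∀ A : Matrix (Fin (2*M+1)) (Fin (2*M+1)) ℝ, Aᴴ = Aᵀ := by
    intro A; ext i j; simp [Matrix.conjTranspose_apply]
  -- Part 1
  have h1 : Sᵀ * S = c • Matrix.diagonal v := by
    have hD : (SR M ρ R₀)ᵀ = SR M ρ R₀ := Matrix.diagonal_transpose _
    have e1 : Sᵀ * S = SR M ρ R₀ * (Ttheta M * (Ttheta M)ᵀ) * SR M ρ R₀ := by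
      rw [hSdef, Matrix.transpose_mul, Matrix.transpose_transpose, hD]
      simp only [Matrix.mul_assoc]
    rw [e1, TTt M, Matrix.mul_smul, Matrix.smul_mul]
    congr 1
    show Matrix.diagonal _ * Matrix.diagonal _ * Matrix.diagonal _ = _
    rw [Matrix.diagonal_mul_diagonal, Matrix.diagonal_mul_diagonal]
    apply congrArg Matrix.diagonal
    funext i
    by_cases hi : (i:ℕ) = 0
    · simp [hv, hi]
      exact Fin.ext hi
    · simp only [hv, if_neg hi, mul_one]
      rw [← hqdef, ← pow_add]
      congr 1
      omega
  refine ⟨h1, ?_, ?_⟩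
  -- Part 2
  · have hmaxpos : (0:ℝ) < max 2 (max (q^2) (q^(2*M))) :=
      lt_of_lt_of_le (by norm_num) (le_max_left _ _)
    have h2 : ‖S‖^2 = ‖Sᵀ * S‖ := by
      rw [sq, ← Matrix.l2_opNorm_conjTranspose_mul_self, hconj]
    rw [h2, h1, ← Matrix.diagonal_smul, l2_opNorm_diagonal_real hne]
    apply le_antisymm
    · apply Finset.sup'_le
      intro i _
      simp only [Pi.smul_apply, smul_eq_mul]
      rw [abs_of_pos (mul_pos hN2 (hvpos i))]
      exact mul_le_mul_of_nonneg_left (entry_le_max M hM q hq i) hN2.le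
    · have hmax : max 2 (max (q^2) (q^(2*M))) = 2 ∨ max 2 (max (q^2) (q^(2*M))) = q^2 ∨
          max 2 (max (q^2) (q^(2*M))) = q^(2*M) := by
        rcases max_choice 2 (max (q^2) (q^(2*M))) with h | h
        · exact Or.inl h
        · rcases max_choice (q^2) (q^(2*M)) with h' | h'
          · exact Or.inr (Or.inl (h.trans h'))
          · exact Or.inr (Or.inr (h.trans h'))
      obtain ⟨i, hi⟩ := exists_entry_eq M hM q _ hmax
      calc c * max 2 (max (q^2) (q^(2*M))) = |(c • v) i| := by
            simp only [Pi.smul_apply, smul_eq_mul]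
            rw [show v i = max 2 (max (q^2) (q^(2*M))) from hi,
              abs_of_pos (mul_pos hN2 hmaxpos)]
        _ ≤ _ := Finset.le_sup' (fun i => |(c • v) i|) (Finset.mem_univ i)
  -- Part 3
  · have hminpos : (0:ℝ) < min 2 (min (q^2) (q^(2*M))) := by
      rcases min_choice 2 (min (q^2) (q^(2*M))) with h | h
      · rw [h]; norm_num
      · rw [h]
        rcases min_choice (q^2) (q^(2*M)) with h' | h' <;> rw [h'] <;> positivity
    have hdetne : S.det ≠ 0 := by
      have hdd : (Sᵀ * S).det ≠ 0 := by
        rw [h1, ← Matrix.diagonal_smul, Matrix.det_diagonal]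
        apply ne_of_gt
        apply Finset.prod_pos
        intro i _
        simpa using mul_pos hN2 (hvpos i)
      intro h
      rw [Matrix.det_mul, Matrix.det_transpose, h, mul_zero] at hdd
      exact hdd rfl
    have h3 : ‖S⁻¹‖^2 = ‖(Sᵀ * S)⁻¹‖ := by
      calc ‖S⁻¹‖^2 = ‖(Sᵀ)⁻¹‖^2 := by
            rw [← Matrix.transpose_nonsing_inv, ← hconj, Matrix.l2_opNorm_conjTranspose]
        _ = ‖((Sᵀ)⁻¹)ᴴ * (Sᵀ)⁻¹‖ := by rw [sq, Matrix.l2_opNorm_conjTranspose_mul_self]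
        _ = ‖(Sᵀ * S)⁻¹‖ := by
            rw [Matrix.mul_inv_rev, hconj, Matrix.transpose_nonsing_inv,
              Matrix.transpose_transpose]
    have h4 : (Sᵀ * S)⁻¹ = Matrix.diagonal (fun i => (c * v i)⁻¹) := by
      rw [h1, ← Matrix.diagonal_smul]
      apply Matrix.inv_eq_right_inv
      rw [Matrix.diagonal_mul_diagonal, ← Matrix.diagonal_one]
      apply congrArg Matrix.diagonal
      funext i
      simp only [Pi.smul_apply, smul_eq_mul]
      exact mul_inv_cancel₀ (mul_pos hN2 (hvpos i)).ne'

    rw [h3, h4, l2_opNorm_diagonal_real hne]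
    apply le_antisymm
    · apply Finset.sup'_le
      intro i _
      rw [abs_of_pos (by positivity)]
      apply inv_anti₀ (mul_pos hN2 hminpos)
      exact mul_le_mul_of_nonneg_left (min_le_entry M hM q hq i) hN2.le
    · have hmin : min 2 (min (q^2) (q^(2*M))) = 2 ∨ min 2 (min (q^2) (q^(2*M))) = q^2 ∨
          min 2 (min (q^2) (q^(2*M))) = q^(2*M) := by
        rcases min_choice 2 (min (q^2) (q^(2*M))) with h | h
        · exact Or.inl h
        · rcases min_choice (q^2) (q^(2*M)) with h' | h'
          · exact Or.inr (Or.inl (h.trans h'))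
          · exact Or.inr (Or.inr (h.trans h'))
      obtain ⟨i, hi⟩ := exists_entry_eq M hM q _ hmin
      calc (c * min 2 (min (q^2) (q^(2*M))))⁻¹ = |(c * v i)⁻¹| := by
            rw [show v i = min 2 (min (q^2) (q^(2*M))) from hi,
              abs_of_pos (by positivity)]
        _ ≤ _ := Finset.le_sup' (fun j => |(c * v j)⁻¹|) (Finset.mem_univ i)
end
end

section
/- Under the setting of the previous theorem (M ≥ 1, ρ > 0 fixed), the function R_0 ↦ cond₂(S) attains its minimum at R_0 = 2^{1/(2M)}·ρ, and the minimum value is 2^{(M-1)/(2M)}, which is strictly less than √2. -/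
open Matrix Real
open scoped Matrix.Norms.L2Operator

noncomputable section

lemma l2norm_diagonal {n : ℕ} (hn : 0 < n) (d : Fin n → ℝ) :
    ‖(Matrix.diagonal d : Matrix (Fin n) (Fin n) ℝ)‖ =
      Finset.univ.sup' (Finset.univ_nonempty_iff.mpr ⟨⟨0, hn⟩⟩) (fun i => |d i|) := by
  classical
  set c := Finset.univ.sup' (Finset.univ_nonempty_iff.mpr ⟨⟨0, hn⟩⟩) (fun i => |d i|) with hc
  have hle : ∀ i, |d i| ≤ c := fun i => Finset.le_sup' (fun i => |d i|) (Finset.mem_univ i)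
  have hc0 : 0 ≤ c := le_trans (abs_nonneg _) (hle ⟨0, hn⟩)
  rw [Matrix.l2_opNorm_def]
  apply le_antisymm
  · apply ContinuousLinearMap.opNorm_le_bound _ hc0
    intro x
    simp only [LinearEquiv.trans_apply, LinearEquiv.coe_coe, Matrix.toEuclideanLin_apply,
      LinearMap.coe_toContinuousLinearMap']
    rw [EuclideanSpace.norm_eq, EuclideanSpace.norm_eq]
    rw [show c * Real.sqrt (∑ i, ‖x i‖ ^ 2) = Real.sqrt (c^2 * ∑ i, ‖x i‖ ^ 2) by
      rw [Real.sqrt_mul (by positivity), Real.sqrt_sq hc0]]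
    apply Real.sqrt_le_sqrt
    rw [Finset.mul_sum]
    apply Finset.sum_le_sum
    intro i _
    simp only [PiLp.toLp_apply, WithLp.ofLp_toLp, Matrix.mulVec_diagonal, Real.norm_eq_abs]
    rw [abs_mul, mul_pow]
    have h1 := hle i
    have h2 : |d i|^2 ≤ c^2 := by nlinarith [abs_nonneg (d i)]
    nlinarith [sq_nonneg (x i), abs_nonneg (x i), sq_abs (x i)]
  · apply Finset.sup'_le
    intro i _
    have h := Matrix.l2_opNorm_mulVec (Matrix.diagonal d) (EuclideanSpace.single i (1:ℝ))
    have h2 : ((EuclideanSpace.equiv (Fin n) ℝ).symm <|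
        Matrix.diagonal d *ᵥ (EuclideanSpace.single i (1:ℝ))) =
        EuclideanSpace.single i (d i) := by
      apply (EuclideanSpace.equiv (Fin n) ℝ).injective
      ext j
      simp only [LinearEquiv.apply_symm_apply]
      show (Matrix.diagonal d *ᵥ _) j = _
      rw [Matrix.mulVec_diagonal]
      show d j * (EuclideanSpace.single i (1:ℝ)) j = _
      rw [EuclideanSpace.single_apply]
      show _ = (EuclideanSpace.single i (d i)) j
      rw [EuclideanSpace.single_apply]
      split <;> simp_all
    rw [h2] at h
    have h3 : ‖EuclideanSpace.single i (d i)‖ = |d i| := by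
      rw [EuclideanSpace.norm_single, Real.norm_eq_abs]
    have h4 : ‖EuclideanSpace.single i (1:ℝ)‖ = 1 := by
      rw [EuclideanSpace.norm_single, norm_one]
    rw [h3, h4, mul_one] at h
    exact h


lemma exp_fin_sum (N : ℕ) (hN : 0 < N) (c : ℤ) (hc : ¬ ((N:ℤ) ∣ c)) :
    ∑ j : Fin N, Complex.exp ((2 * Real.pi * c * j / N : ℝ) * Complex.I) = 0 := by
  set z : ℂ := Complex.exp ((2 * Real.pi * c / N : ℝ) * Complex.I) with hz
  have hterm : ∀ j : Fin N, Complex.exp ((2 * Real.pi * c * j / N : ℝ) * Complex.I) = z ^ (j:ℕ) := by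
    intro j
    rw [hz, ← Complex.exp_nat_mul]
    congr 1
    push_cast
    ring
  rw [Finset.sum_congr rfl (fun j _ => hterm j), Fin.sum_univ_eq_sum_range]
  have hz1 : z ≠ 1 := by
    rw [hz, Ne, Complex.exp_eq_one_iff]
    push_neg
    intro n hn
    have him : ((2 * Real.pi * c / N : ℝ) : ℂ) * Complex.I ≠ (n:ℂ) * (2 * Real.pi * Complex.I) := by
      intro h
      have : (2 * Real.pi * c / N : ℝ) = n * (2 * Real.pi) := by
        have := congrArg Complex.im h
        simpa [Complex.ofReal_mul, Complex.mul_im] using this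
      have hpi := Real.pi_ne_zero
      have hNne : (N:ℝ) ≠ 0 := Nat.cast_ne_zero.mpr hN.ne'
      have hcn : (c:ℝ) = n * N := by
        field_simp at this
        have h2 : (2:ℝ) * π ≠ 0 := by positivity
        have := mul_left_cancel₀ h2 (by rw [this]; ring : (2:ℝ)*π*(c:ℝ) = 2*π*((n:ℝ)*(N:ℝ)))
        linarith
      have : c = n * N := by exact_mod_cast hcn
      exact hc ⟨n, by linarith [this]⟩
    exact him hn
  have hzN : z ^ N = 1 := by
    rw [hz, ← Complex.exp_nat_mul, Complex.exp_eq_one_iff]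
    refine ⟨c, ?_⟩
    push_cast
    have hNne : (N:ℂ) ≠ 0 := Nat.cast_ne_zero.mpr hN.ne'
    field_simp
  rw [geom_sum_eq hz1, hzN]
  simp

lemma cos_fin_sum (N : ℕ) (hN : 0 < N) (c : ℤ) :
    ∑ j : Fin N, Real.cos (2 * Real.pi * c * j / N) = if (N:ℤ) ∣ c then (N:ℝ) else 0 := by
  split_ifs with hdvd
  · obtain ⟨m, rfl⟩ := hdvd
    have : ∀ j : Fin N, Real.cos (2 * Real.pi * (N * m) * j / N) = 1 := by
      intro j
      have hNne : (N:ℝ) ≠ 0 := Nat.cast_ne_zero.mpr hN.ne'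
      have h2 := Real.cos_int_mul_two_pi (m * j)
      convert h2 using 2
      push_cast
      field_simp
    simp [this]
  · have h := exp_fin_sum N hN c hdvd
    have := congrArg Complex.re h
    rw [Complex.re_sum] at this
    simpa only [Complex.exp_ofReal_mul_I_re, Complex.zero_re] using this

lemma sin_fin_sum (N : ℕ) (hN : 0 < N) (c : ℤ) :
    ∑ j : Fin N, Real.sin (2 * Real.pi * c * j / N) = 0 := by
  by_cases hdvd : (N:ℤ) ∣ c
  · obtain ⟨m, rfl⟩ := hdvd
    have : ∀ j : Fin N, Real.sin (2 * Real.pi * (N * m) * j / N) = 0 := by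
      intro j
      have hNne : (N:ℝ) ≠ 0 := Nat.cast_ne_zero.mpr hN.ne'
      have h2 := Real.sin_int_mul_pi (2 * m * j)
      convert h2 using 2
      push_cast
      field_simp
    simp [this]
  · have h := exp_fin_sum N hN c hdvd
    have := congrArg Complex.im h
    rw [Complex.im_sum] at this
    simpa only [Complex.exp_ofReal_mul_I_im, Complex.zero_im] using this

lemma not_dvd_of_bounds {N : ℕ} {c : ℤ} (h0 : c ≠ 0) (hb : c.natAbs < N) : ¬ ((N:ℤ) ∣ c) := by
  intro h
  exact h0 (Int.eq_zero_of_dvd_of_natAbs_lt_natAbs h (by simpa using hb))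

lemma sum_cc (N k l : ℕ) (hN : 0 < N) (hk : 0 < k) (hl : 0 < l) (hkl : k + l < N) :
    ∑ j : Fin N, Real.cos (k * (2 * Real.pi * j / N)) * Real.cos (l * (2 * Real.pi * j / N)) =
      if k = l then (N:ℝ)/2 else 0 := by
  have key : ∀ j : Fin N, Real.cos (k * (2 * Real.pi * j / N)) * Real.cos (l * (2 * Real.pi * j / N))
      = (Real.cos (2 * Real.pi * (((k:ℤ) - (l:ℤ) : ℤ) : ℝ) * j / N) + Real.cos (2 * Real.pi * (((k:ℤ) + (l:ℤ) : ℤ) : ℝ) * j / N)) / 2 := by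
    intro j
    have h1 : (2 * Real.pi * (((k:ℤ) - l : ℤ):ℝ) * j / N) =
        k * (2 * Real.pi * j / N) - l * (2 * Real.pi * j / N) := by push_cast; ring
    have h2 : (2 * Real.pi * (((k:ℤ) + l : ℤ):ℝ) * j / N) =
        k * (2 * Real.pi * j / N) + l * (2 * Real.pi * j / N) := by push_cast; ring
    rw [h1, h2, Real.cos_sub, Real.cos_add]
    ring
  rw [Finset.sum_congr rfl (fun j _ => key j), ← Finset.sum_div, Finset.sum_add_distrib,
    cos_fin_sum N hN ((k:ℤ) - (l:ℤ)), cos_fin_sum N hN ((k:ℤ) + (l:ℤ))]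
  have hns : ¬ ((N:ℤ) ∣ ((k:ℤ) + (l:ℤ))) := not_dvd_of_bounds (by omega) (by omega)
  by_cases hkl' : k = l
  · subst hkl'
    norm_num [hns, sub_self]
  · have hnd : ¬ ((N:ℤ) ∣ ((k:ℤ) - (l:ℤ))) := not_dvd_of_bounds (by omega) (by omega)
    simp [hnd, hns, hkl']

lemma sum_ss (N k l : ℕ) (hN : 0 < N) (hk : 0 < k) (hl : 0 < l) (hkl : k + l < N) :
    ∑ j : Fin N, Real.sin (k * (2 * Real.pi * j / N)) * Real.sin (l * (2 * Real.pi * j / N)) =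
      if k = l then (N:ℝ)/2 else 0 := by
  have key : ∀ j : Fin N, Real.sin (k * (2 * Real.pi * j / N)) * Real.sin (l * (2 * Real.pi * j / N))
      = (Real.cos (2 * Real.pi * (((k:ℤ) - (l:ℤ) : ℤ) : ℝ) * j / N) - Real.cos (2 * Real.pi * (((k:ℤ) + (l:ℤ) : ℤ) : ℝ) * j / N)) / 2 := by
    intro j
    have h1 : (2 * Real.pi * (((k:ℤ) - l : ℤ):ℝ) * j / N) =
        k * (2 * Real.pi * j / N) - l * (2 * Real.pi * j / N) := by push_cast; ring
    have h2 : (2 * Real.pi * (((k:ℤ) + l : ℤ):ℝ) * j / N) =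
        k * (2 * Real.pi * j / N) + l * (2 * Real.pi * j / N) := by push_cast; ring
    rw [h1, h2, Real.cos_sub, Real.cos_add]
    ring
  rw [Finset.sum_congr rfl (fun j _ => key j), ← Finset.sum_div, Finset.sum_sub_distrib,
    cos_fin_sum N hN ((k:ℤ) - (l:ℤ)), cos_fin_sum N hN ((k:ℤ) + (l:ℤ))]
  have hns : ¬ ((N:ℤ) ∣ ((k:ℤ) + (l:ℤ))) := not_dvd_of_bounds (by omega) (by omega)
  by_cases hkl' : k = l
  · subst hkl'
    norm_num [hns, sub_self]
  · have hnd : ¬ ((N:ℤ) ∣ ((k:ℤ) - (l:ℤ))) := not_dvd_of_bounds (by omega) (by omega)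
    simp [hnd, hns, hkl']

lemma sum_sc (N k l : ℕ) (hN : 0 < N) :
    ∑ j : Fin N, Real.sin (k * (2 * Real.pi * j / N)) * Real.cos (l * (2 * Real.pi * j / N)) = 0 := by
  have key : ∀ j : Fin N, Real.sin (k * (2 * Real.pi * j / N)) * Real.cos (l * (2 * Real.pi * j / N))
      = (Real.sin (2 * Real.pi * (((k:ℤ) + (l:ℤ) : ℤ) : ℝ) * j / N) + Real.sin (2 * Real.pi * (((k:ℤ) - (l:ℤ) : ℤ) : ℝ) * j / N)) / 2 := by
    intro j
    have h1 : (2 * Real.pi * (((k:ℤ) - l : ℤ):ℝ) * j / N) =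
        k * (2 * Real.pi * j / N) - l * (2 * Real.pi * j / N) := by push_cast; ring
    have h2 : (2 * Real.pi * (((k:ℤ) + l : ℤ):ℝ) * j / N) =
        k * (2 * Real.pi * j / N) + l * (2 * Real.pi * j / N) := by push_cast; ring
    rw [h1, h2, Real.sin_sub, Real.sin_add]
    ring
  rw [Finset.sum_congr rfl (fun j _ => key j), ← Finset.sum_div, Finset.sum_add_distrib,
    sin_fin_sum N hN, sin_fin_sum N hN]
  norm_num

lemma sum_c (N k : ℕ) (hN : 0 < N) (hk : 0 < k) (hkN : k < N) :
    ∑ j : Fin N, Real.cos (k * (2 * Real.pi * j / N)) = 0 := by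
  have key : ∀ j : Fin N, Real.cos (k * (2 * Real.pi * j / N))
      = Real.cos (2 * Real.pi * (k:ℤ) * j / N) := by
    intro j; congr 1; push_cast; ring
  rw [Finset.sum_congr rfl (fun j _ => key j), cos_fin_sum N hN]
  have : ¬ ((N:ℤ) ∣ (k:ℤ)) := not_dvd_of_bounds (by omega) (by simpa using hkN)
  simp [this]

lemma sum_s (N k : ℕ) (hN : 0 < N) :
    ∑ j : Fin N, Real.sin (k * (2 * Real.pi * j / N)) = 0 := by
  have key : ∀ j : Fin N, Real.sin (k * (2 * Real.pi * j / N))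
      = Real.sin (2 * Real.pi * (k:ℤ) * j / N) := by
    intro j; congr 1; push_cast; ring
  rw [Finset.sum_congr rfl (fun j _ => key j), sin_fin_sum N hN]


lemma theta_eq (N : ℕ) (j : Fin N) (k : ℕ) :
    (k : ℝ) * theta N j = k * (2 * Real.pi * j / N) := rfl

lemma TT (M : ℕ) (hM : 1 ≤ M) :
    Ttheta M * (Ttheta M)ᵀ = Matrix.diagonal (fun i : Fin (2*M+1) =>
      if i.val = 0 then ((2*M+1 : ℕ):ℝ) else ((2*M+1 : ℕ):ℝ)/2) := by
  have hN : 0 < 2*M+1 := by omega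
  ext i i'
  have hib := i.isLt
  have hi'b := i'.isLt
  rw [Matrix.mul_apply]
  simp only [Matrix.transpose_apply, Ttheta, theta_eq]
  by_cases hi : i.val = 0
  · by_cases hi' : i'.val = 0
    · have : i = i' := Fin.ext (by omega)
      subst this
      simp only [hi, reduceIte, one_mul, Finset.sum_const, Finset.card_univ, Fintype.card_fin,
        nsmul_eq_mul, mul_one, Matrix.diagonal_apply_eq]
    · have hne : i ≠ i' := fun h => hi' (h ▸ hi)
      rw [Matrix.diagonal_apply_ne _ hne]
      simp only [hi, hi', reduceIte, one_mul]
      by_cases hp : i'.val % 2 = 1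
      · simp only [hp, reduceIte]
        exact sum_c _ _ hN (by omega) (by omega)
      · simp only [hp, reduceIte]
        exact sum_s _ _ hN
  · by_cases hi' : i'.val = 0
    · have hne : i ≠ i' := fun h => hi (h ▸ hi')
      rw [Matrix.diagonal_apply_ne _ hne]
      simp only [hi', hi, reduceIte, mul_one]
      by_cases hp : i.val % 2 = 1
      · simp only [hp, reduceIte]
        exact sum_c _ _ hN (by omega) (by omega)
      · simp only [hp, reduceIte]
        exact sum_s _ _ hN
    · have hk1 : 1 ≤ (i.val+1)/2 := by omega
      have hkM : (i.val+1)/2 ≤ M := by omega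
      have hl1 : 1 ≤ (i'.val+1)/2 := by omega
      have hlM : (i'.val+1)/2 ≤ M := by omega
      by_cases hp : i.val % 2 = 1 <;> by_cases hp' : i'.val % 2 = 1
      · simp only [hi, hi', hp, hp', reduceIte]
        rw [sum_cc _ _ _ hN (by omega) (by omega) (by omega)]
        rcases eq_or_ne i i' with rfl | hne
        · rw [Matrix.diagonal_apply_eq, if_pos rfl, if_neg hi]
        · rw [Matrix.diagonal_apply_ne _ hne, if_neg (by
            intro h
            exact hne (Fin.ext (by omega)))]
      · simp only [hi, hi', hp, hp', reduceIte]
        have hne : i ≠ i' := by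
          intro h
          rw [h] at hp
          exact hp' hp
        rw [Matrix.diagonal_apply_ne _ hne]
        have key : ∀ j : Fin (2*M+1),
            Real.cos (((i.val+1)/2 : ℕ) * (2 * Real.pi * j / ((2*M+1 : ℕ):ℝ))) *
            Real.sin (((i'.val+1)/2 : ℕ) * (2 * Real.pi * j / ((2*M+1 : ℕ):ℝ))) =
            Real.sin (((i'.val+1)/2 : ℕ) * (2 * Real.pi * j / ((2*M+1 : ℕ):ℝ))) *
            Real.cos (((i.val+1)/2 : ℕ) * (2 * Real.pi * j / ((2*M+1 : ℕ):ℝ))) := fun j => mul_comm _ _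
        rw [Finset.sum_congr rfl (fun j _ => key j)]
        exact sum_sc _ _ _ hN
      · simp only [hi, hi', hp, hp', reduceIte]
        have hne : i ≠ i' := by
          intro h
          rw [h] at hp
          exact hp hp'
        rw [Matrix.diagonal_apply_ne _ hne]
        exact sum_sc _ _ _ hN
      · simp only [hi, hi', hp, hp', reduceIte]
        rw [sum_ss _ _ _ hN (by omega) (by omega) (by omega)]
        rcases eq_or_ne i i' with rfl | hne
        · rw [Matrix.diagonal_apply_eq, if_pos rfl, if_neg hi]
        · rw [Matrix.diagonal_apply_ne _ hne, if_neg (by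
            intro h
            exact hne (Fin.ext (by omega)))]

def dvec (M : ℕ) (x : ℝ) : Fin (2*M+1) → ℝ :=
  fun i => if i.val = 0 then 1 else x ^ ((i.val+1)/2 : ℕ)

def evec (M : ℕ) (x : ℝ) : Fin (2*M+1) → ℝ :=
  fun i => (if i.val = 0 then ((2*M+1:ℕ):ℝ) else ((2*M+1:ℕ):ℝ)/2) * (dvec M x i)^2

lemma dvec_pos (M : ℕ) {x : ℝ} (hx : 0 < x) (i : Fin (2*M+1)) : 0 < dvec M x i := by
  unfold dvec
  split
  · exact one_pos
  · positivity

lemma evec_pos (M : ℕ) {x : ℝ} (hx : 0 < x) (i : Fin (2*M+1)) : 0 < evec M x i := by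
  have h1 := dvec_pos M hx i
  unfold evec
  have hN : (0:ℝ) < ((2*M+1:ℕ):ℝ) := by positivity
  split <;> positivity

lemma sup'_inv_eq {n : ℕ} (hn : 0 < n) (f : Fin n → ℝ) (hf : ∀ i, 0 < f i) :
    Finset.univ.sup' (Finset.univ_nonempty_iff.mpr ⟨⟨0, hn⟩⟩) (fun i => |(f i)⁻¹|) =
      (Finset.univ.inf' (Finset.univ_nonempty_iff.mpr ⟨⟨0, hn⟩⟩) f)⁻¹ := by
  have hne : (Finset.univ : Finset (Fin n)).Nonempty := Finset.univ_nonempty_iff.mpr ⟨⟨0, hn⟩⟩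
  have hinfpos : 0 < Finset.univ.inf' hne f := by
    obtain ⟨i₀, _, h⟩ := Finset.exists_mem_eq_inf' hne f
    rw [h]; exact hf i₀
  apply le_antisymm
  · apply Finset.sup'_le
    intro i _
    rw [abs_of_pos (inv_pos.mpr (hf i))]
    exact inv_anti₀ hinfpos (Finset.inf'_le f (Finset.mem_univ i))
  · obtain ⟨i₀, _, h⟩ := Finset.exists_mem_eq_inf' hne f
    rw [h]
    calc (f i₀)⁻¹ = |(f i₀)⁻¹| := (abs_of_pos (inv_pos.mpr (hf i₀))).symm
      _ ≤ _ := Finset.le_sup' (fun i => |(f i)⁻¹|) (Finset.mem_univ i₀)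

lemma condA (M : ℕ) (hM : 1 ≤ M) (x : ℝ) (hx : 0 < x) :
    ‖(Ttheta M)ᵀ * Matrix.diagonal (dvec M x)‖ *
      ‖((Ttheta M)ᵀ * Matrix.diagonal (dvec M x))⁻¹‖ =
    Real.sqrt ((Finset.univ.sup' (Finset.univ_nonempty_iff.mpr ⟨⟨0, by omega⟩⟩) (evec M x)) /
      (Finset.univ.inf' (Finset.univ_nonempty_iff.mpr ⟨⟨0, by omega⟩⟩) (evec M x))) := by
  classical
  have hn : 0 < 2*M+1 := by omega
  set A := (Ttheta M)ᵀ * Matrix.diagonal (dvec M x) with hA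
  have hne : (Finset.univ : Finset (Fin (2*M+1))).Nonempty :=
    Finset.univ_nonempty_iff.mpr ⟨⟨0, hn⟩⟩
  set s := Finset.univ.sup' hne (evec M x) with hs
  set t := Finset.univ.inf' hne (evec M x) with ht
  have hepos := evec_pos M hx
  have hspos : 0 < s := lt_of_lt_of_le (hepos ⟨0, hn⟩) (Finset.le_sup' _ (Finset.mem_univ _))
  have htpos : 0 < t := by
    obtain ⟨i₀, _, h⟩ := Finset.exists_mem_eq_inf' hne (evec M x)
    rw [ht, h]; exact hepos i₀
  -- A^H A = diagonal evec
  have h1 : Aᴴ * A = Matrix.diagonal (evec M x) := by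
    rw [hA, Matrix.conjTranspose_eq_transpose_of_trivial, Matrix.transpose_mul,
      Matrix.transpose_transpose, Matrix.diagonal_transpose]
    rw [show Matrix.diagonal (dvec M x) * Ttheta M * ((Ttheta M)ᵀ * Matrix.diagonal (dvec M x)) =
        Matrix.diagonal (dvec M x) * (Ttheta M * (Ttheta M)ᵀ) * Matrix.diagonal (dvec M x) by
      noncomm_ring]
    rw [TT M hM, Matrix.diagonal_mul_diagonal, Matrix.diagonal_mul_diagonal]
    refine congrArg Matrix.diagonal ?_
    funext i
    unfold evec
    ring
  -- norm of A
  have hnormA : ‖A‖ = Real.sqrt s := by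
    have h2 := Matrix.l2_opNorm_conjTranspose_mul_self A
    rw [h1, l2norm_diagonal hn (evec M x)] at h2
    have h3 : Finset.univ.sup' (Finset.univ_nonempty_iff.mpr ⟨⟨0, hn⟩⟩)
        (fun i => |evec M x i|) = s := by
      rw [hs]
      exact Finset.sup'_congr _ rfl (fun i _ => abs_of_pos (hepos i))
    rw [h3] at h2
    have h2' : s = ‖A‖ * ‖A‖ := h2
    rw [h2', Real.sqrt_mul_self (norm_nonneg _)]
  -- invertibility
  have hdet : IsUnit A.det := by
    rw [isUnit_iff_ne_zero]
    intro h0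
    have h2 := congrArg Matrix.det h1
    rw [Matrix.det_mul, Matrix.conjTranspose_eq_transpose_of_trivial, Matrix.det_transpose,
      h0, Matrix.det_diagonal, mul_zero] at h2
    have : 0 < ∏ i, evec M x i := Finset.prod_pos (fun i _ => hepos i)
    rw [← h2] at this
    exact lt_irrefl 0 this
  -- A⁻¹ (A⁻¹)^H = diagonal evec⁻¹
  have hAtA : Aᵀ * A = Matrix.diagonal (evec M x) := by
    rw [← Matrix.conjTranspose_eq_transpose_of_trivial A]
    exact h1
  have h4 : A⁻¹ * (A⁻¹)ᴴ = Matrix.diagonal (fun i => (evec M x i)⁻¹) := by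
    rw [Matrix.conjTranspose_eq_transpose_of_trivial, Matrix.transpose_nonsing_inv,
      ← Matrix.mul_inv_rev, hAtA]
    apply Matrix.inv_eq_right_inv
    rw [Matrix.diagonal_mul_diagonal]
    rw [show (fun i => evec M x i * (evec M x i)⁻¹) = fun _ => (1:ℝ) by
      funext i; exact mul_inv_cancel₀ (hepos i).ne']
    exact Matrix.diagonal_one
  have hnormAinv : ‖A⁻¹‖ = Real.sqrt t⁻¹ := by
    have h5 := Matrix.l2_opNorm_conjTranspose_mul_self ((A⁻¹)ᴴ)
    rw [Matrix.conjTranspose_conjTranspose, h4,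
      l2norm_diagonal hn (fun i => (evec M x i)⁻¹), Matrix.l2_opNorm_conjTranspose,
      sup'_inv_eq hn (evec M x) hepos] at h5
    have h6 : t⁻¹ = ‖A⁻¹‖ * ‖A⁻¹‖ := h5
    rw [h6, Real.sqrt_mul_self (norm_nonneg _)]
  rw [hnormA, hnormAinv, ← Real.sqrt_mul hspos.le, div_eq_mul_inv]

lemma two_rpow_sq (a : ℝ) : ((2:ℝ)^a)^2 = (2:ℝ)^(2*a) := by
  rw [← Real.rpow_natCast ((2:ℝ)^a) 2, ← Real.rpow_mul (by norm_num)]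
  congr 1
  push_cast
  ring

lemma sqrt_two_rpow (a : ℝ) : Real.sqrt ((2:ℝ)^(2*a)) = (2:ℝ)^a := by
  rw [← two_rpow_sq, Real.sqrt_sq (Real.rpow_nonneg (by norm_num) a)]

lemma two_rpow_le {a b : ℝ} (h : a ≤ b) : (2:ℝ)^a ≤ (2:ℝ)^b :=
  (Real.rpow_le_rpow_left_iff (by norm_num : (1:ℝ) < 2)).mpr h

lemma xs_pow (M : ℕ) (k : ℕ) :
    ((2:ℝ)^((1:ℝ)/(2*(M:ℝ))))^k = (2:ℝ)^((k:ℝ)/(2*(M:ℝ))) := by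
  rw [← Real.rpow_natCast ((2:ℝ)^((1:ℝ)/(2*(M:ℝ)))) k, ← Real.rpow_mul (by norm_num)]
  congr 1
  ring

lemma evec_zero (M : ℕ) (x : ℝ) : evec M x ⟨0, by omega⟩ = ((2*M+1:ℕ):ℝ) := by
  simp [evec, dvec]

lemma evec_ne (M : ℕ) (x : ℝ) (i : Fin (2*M+1)) (hi : i.val ≠ 0) :
    evec M x i = ((2*M+1:ℕ):ℝ)/2 * (x^((i.val+1)/2 : ℕ))^2 := by
  simp [evec, dvec, hi]

lemma cond_ge (M : ℕ) (hM : 1 ≤ M) (x : ℝ) (hx : 0 < x) :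
    (2:ℝ)^(((M:ℝ)-1)/(2*(M:ℝ))) ≤
      ‖(Ttheta M)ᵀ * Matrix.diagonal (dvec M x)‖ *
        ‖((Ttheta M)ᵀ * Matrix.diagonal (dvec M x))⁻¹‖ := by
  have hn : 0 < 2*M+1 := by omega
  have hMr : (1:ℝ) ≤ (M:ℝ) := by exact_mod_cast hM
  have hNpos : (0:ℝ) < ((2*M+1:ℕ):ℝ) := by positivity
  rw [condA M hM x hx]
  have hne : (Finset.univ : Finset (Fin (2*M+1))).Nonempty :=
    Finset.univ_nonempty_iff.mpr ⟨⟨0, hn⟩⟩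
  set s := Finset.univ.sup' (Finset.univ_nonempty_iff.mpr ⟨⟨0, by omega⟩⟩) (evec M x) with hs
  set t := Finset.univ.inf' (Finset.univ_nonempty_iff.mpr ⟨⟨0, by omega⟩⟩) (evec M x) with ht
  have htpos : 0 < t := by
    obtain ⟨i₀, _, h⟩ := Finset.exists_mem_eq_inf' _ (evec M x)
    rw [ht, h]; exact evec_pos M hx i₀
  have hsN : ((2*M+1:ℕ):ℝ) ≤ s := by
    rw [hs, ← evec_zero M x]
    exact Finset.le_sup' _ (Finset.mem_univ _)
  have hsM : ((2*M+1:ℕ):ℝ)/2 * (x^M)^2 ≤ s := by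
    have h1 : evec M x ⟨2*M, by omega⟩ = ((2*M+1:ℕ):ℝ)/2 * (x^M)^2 := by
      rw [evec_ne M x ⟨2*M, by omega⟩ (by simp; omega), show ((2*M)+1)/2 = M by omega]
    rw [hs, ← h1]
    exact Finset.le_sup' _ (Finset.mem_univ _)
  have htx : t ≤ ((2*M+1:ℕ):ℝ)/2 * x^2 := by
    have h1 : evec M x ⟨1, by omega⟩ = ((2*M+1:ℕ):ℝ)/2 * x^2 := by
      rw [evec_ne M x ⟨1, by omega⟩ (by simp)]
      norm_num
    rw [ht, ← h1]
    exact Finset.inf'_le _ (Finset.mem_univ _)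
  -- reduce to showing 2^{2a} ≤ s/t where a = (M-1)/(2M)
  rw [show (((M:ℝ)-1)/(2*(M:ℝ))) = ((M:ℝ)-1)/(2*(M:ℝ)) from rfl]
  have key : (2:ℝ)^(2*(((M:ℝ)-1)/(2*(M:ℝ)))) ≤ s / t := by
    rcases le_or_gt ((2:ℝ)^((1:ℝ)/(2*(M:ℝ)))) x with hcase | hcase
    · -- x ≥ x* : use x^{2M-2} ≤ s/t
      have hxs0 : (0:ℝ) ≤ (2:ℝ)^((1:ℝ)/(2*(M:ℝ))) := Real.rpow_nonneg (by norm_num) _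
      have e1 : (2:ℝ)^(2*(((M:ℝ)-1)/(2*(M:ℝ)))) = ((2:ℝ)^((1:ℝ)/(2*(M:ℝ))))^(2*M-2 : ℕ) := by
        rw [xs_pow]
        congr 1
        have h2 : ((2*M-2 : ℕ):ℝ) = 2*(M:ℝ)-2 := by
          have : 2 ≤ 2*M := by omega
          push_cast [this]
          ring
        rw [h2]
        field_simp
      rw [e1]
      have e2 : ((2:ℝ)^((1:ℝ)/(2*(M:ℝ))))^(2*M-2 : ℕ) ≤ x^(2*M-2 : ℕ) :=
        pow_le_pow_left₀ hxs0 hcase _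
      refine le_trans e2 ?_
      rw [le_div_iff₀ htpos]
      have e3 : x^(2*M-2:ℕ) * x^2 = x^(2*M) := by
        rw [← pow_add]
        congr 1
        omega
      have e4 : (x^M)^2 = x^(2*M) := by
        rw [← pow_mul]
        congr 1
        omega
      have e5 : x^(2*M-2:ℕ) * t ≤ x^(2*M-2:ℕ) * (((2*M+1:ℕ):ℝ)/2 * x^2) :=
        mul_le_mul_of_nonneg_left htx (by positivity)
      refine le_trans e5 ?_
      calc x^(2*M-2:ℕ) * (((2*M+1:ℕ):ℝ)/2 * x^2) = ((2*M+1:ℕ):ℝ)/2 * (x^M)^2 := by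
            rw [e4, ← e3]; ring
        _ ≤ s := hsM
    · -- x < x*: use 2/x² ≤ s/t
      have e1 : (2:ℝ)^(2*(((M:ℝ)-1)/(2*(M:ℝ)))) ≤ 2 / x^2 := by
        have hx2 : x^2 ≤ (2:ℝ)^((1:ℝ)/(M:ℝ)) := by
          have := pow_le_pow_left₀ hx.le hcase.le 2
          rwa [xs_pow M 2, show ((2:ℕ):ℝ)/(2*(M:ℝ)) = (1:ℝ)/(M:ℝ) by
            push_cast
            field_simp] at this
        have h2 : (2:ℝ)^(2*(((M:ℝ)-1)/(2*(M:ℝ)))) = 2 / (2:ℝ)^((1:ℝ)/(M:ℝ)) := by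
          rw [show (2:ℝ) / (2:ℝ)^((1:ℝ)/(M:ℝ)) = (2:ℝ)^((1:ℝ) - (1:ℝ)/(M:ℝ)) by
            rw [Real.rpow_sub (by norm_num), Real.rpow_one]]
          congr 1
          field_simp
        rw [h2]
        apply div_le_div_of_nonneg_left (by norm_num) (by positivity) hx2
      refine le_trans e1 ?_
      rw [div_le_div_iff₀ (by positivity) htpos]
      nlinarith [mul_le_mul_of_nonneg_left htx (by norm_num : (0:ℝ) ≤ 2),
        mul_le_mul_of_nonneg_right hsN (sq_nonneg x)]
  calc (2:ℝ)^(((M:ℝ)-1)/(2*(M:ℝ))) = Real.sqrt ((2:ℝ)^(2*(((M:ℝ)-1)/(2*(M:ℝ))))) :=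
        (sqrt_two_rpow _).symm
    _ ≤ Real.sqrt (s/t) := Real.sqrt_le_sqrt key

lemma cond_eq_at (M : ℕ) (hM : 1 ≤ M) :
    ‖(Ttheta M)ᵀ * Matrix.diagonal (dvec M ((2:ℝ)^((1:ℝ)/(2*(M:ℝ)))))‖ *
      ‖((Ttheta M)ᵀ * Matrix.diagonal (dvec M ((2:ℝ)^((1:ℝ)/(2*(M:ℝ))))))⁻¹‖ =
    (2:ℝ)^(((M:ℝ)-1)/(2*(M:ℝ))) := by
  have hn : 0 < 2*M+1 := by omega
  have hMr : (1:ℝ) ≤ (M:ℝ) := by exact_mod_cast hM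
  have hMne : (M:ℝ) ≠ 0 := by linarith
  have hNpos : (0:ℝ) < ((2*M+1:ℕ):ℝ) := by positivity
  set xs := (2:ℝ)^((1:ℝ)/(2*(M:ℝ))) with hxs
  have hxspos : 0 < xs := Real.rpow_pos_of_pos (by norm_num) _
  rw [condA M hM xs hxspos]
  -- evec values: 2^{k/M} scaled
  have hsq : ∀ k : ℕ, (xs^k)^2 = (2:ℝ)^((k:ℝ)/(M:ℝ)) := by
    intro k
    rw [hxs, xs_pow, two_rpow_sq]
    congr 1
    field_simp
  have hev : ∀ i : Fin (2*M+1), i.val ≠ 0 →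
      evec M xs i = ((2*M+1:ℕ):ℝ)/2 * (2:ℝ)^((((i.val+1)/2 : ℕ):ℝ)/(M:ℝ)) := by
    intro i hi
    rw [evec_ne M xs i hi, hsq]
  -- sup = N
  have hsup : Finset.univ.sup' (Finset.univ_nonempty_iff.mpr ⟨⟨0, by omega⟩⟩) (evec M xs)
      = ((2*M+1:ℕ):ℝ) := by
    apply le_antisymm
    · apply Finset.sup'_le
      intro i _
      by_cases hi : i.val = 0
      · have : i = ⟨0, hn⟩ := Fin.ext hi
        rw [this, evec_zero]
      · rw [hev i hi]
        have hk : (((i.val+1)/2 : ℕ):ℝ)/(M:ℝ) ≤ 1 := by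
          rw [div_le_one (by linarith)]
          have : (i.val+1)/2 ≤ M := by have := i.isLt; omega
          exact_mod_cast this
        have := two_rpow_le hk
        rw [Real.rpow_one] at this
        nlinarith
    · rw [← evec_zero M xs]
      exact Finset.le_sup' _ (Finset.mem_univ _)
  -- inf = N/2 * 2^{1/M}
  have hinf : Finset.univ.inf' (Finset.univ_nonempty_iff.mpr ⟨⟨0, by omega⟩⟩) (evec M xs)
      = ((2*M+1:ℕ):ℝ)/2 * (2:ℝ)^((1:ℝ)/(M:ℝ)) := by
    apply le_antisymm
    · have h1 : evec M xs ⟨1, by omega⟩ = ((2*M+1:ℕ):ℝ)/2 * (2:ℝ)^((1:ℝ)/(M:ℝ)) := by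
        rw [hev ⟨1, by omega⟩ (by simp)]
        norm_num
      rw [← h1]
      exact Finset.inf'_le _ (Finset.mem_univ _)
    · apply Finset.le_inf'
      intro i _
      by_cases hi : i.val = 0
      · have : i = ⟨0, hn⟩ := Fin.ext hi
        rw [this, evec_zero]
        have h2 : (2:ℝ)^((1:ℝ)/(M:ℝ)) ≤ 2 := by
          have := two_rpow_le (show (1:ℝ)/(M:ℝ) ≤ 1 by rw [div_le_one (by linarith)]; linarith)
          rwa [Real.rpow_one] at this
        nlinarith
      · rw [hev i hi]
        have hk : (1:ℝ)/(M:ℝ) ≤ (((i.val+1)/2 : ℕ):ℝ)/(M:ℝ) := by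
          apply div_le_div_of_nonneg_right ?_ (by linarith)
          · have : 1 ≤ (i.val+1)/2 := by omega
            exact_mod_cast this
        have := two_rpow_le hk
        nlinarith [Real.rpow_pos_of_pos (show (0:ℝ) < 2 by norm_num) ((1:ℝ)/(M:ℝ))]
  rw [hsup, hinf]
  have hrp : (0:ℝ) < (2:ℝ)^((1:ℝ)/(M:ℝ)) := Real.rpow_pos_of_pos (by norm_num) _
  have hratio : ((2*M+1:ℕ):ℝ) / (((2*M+1:ℕ):ℝ)/2 * (2:ℝ)^((1:ℝ)/(M:ℝ)))
      = (2:ℝ)^(2*(((M:ℝ)-1)/(2*(M:ℝ)))) := by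
    rw [show (2:ℝ)^(2*(((M:ℝ)-1)/(2*(M:ℝ)))) = (2:ℝ)^((1:ℝ) - (1:ℝ)/(M:ℝ)) by
        congr 1; field_simp,
      Real.rpow_sub (by norm_num), Real.rpow_one]
    field_simp
  rw [hratio, sqrt_two_rpow]

/-- The function `R₀ ↦ cond₂(S)` attains its minimum over `R₀ > 0` at
`R₀ = 2^{1/(2M)}ρ`, the minimum value being `2^{(M-1)/(2M)} < √2`. -/
theorem condS_min (M : ℕ) (hM : 1 ≤ M) (ρ : ℝ) (hρ : 0 < ρ) :
    (∀ R₀ : ℝ, 0 < R₀ →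
      ‖(Ttheta M)ᵀ * SR M ρ ((2 : ℝ) ^ ((1 : ℝ) / (2 * M)) * ρ)‖ *
          ‖((Ttheta M)ᵀ * SR M ρ ((2 : ℝ) ^ ((1 : ℝ) / (2 * M)) * ρ))⁻¹‖ ≤
        ‖(Ttheta M)ᵀ * SR M ρ R₀‖ * ‖((Ttheta M)ᵀ * SR M ρ R₀)⁻¹‖) ∧
    ‖(Ttheta M)ᵀ * SR M ρ ((2 : ℝ) ^ ((1 : ℝ) / (2 * M)) * ρ)‖ *
        ‖((Ttheta M)ᵀ * SR M ρ ((2 : ℝ) ^ ((1 : ℝ) / (2 * M)) * ρ))⁻¹‖ =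
      (2 : ℝ) ^ (((M : ℝ) - 1) / (2 * M)) ∧
    (2 : ℝ) ^ (((M : ℝ) - 1) / (2 * M)) < Real.sqrt 2 := by
  have hMr : (1:ℝ) ≤ (M:ℝ) := by exact_mod_cast hM
  have hSR : ∀ R₀ : ℝ, SR M ρ R₀ = Matrix.diagonal (dvec M (R₀/ρ)) := fun _ => rfl
  have hxs : ((2:ℝ)^((1:ℝ)/(2*(M:ℝ))) * ρ)/ρ = (2:ℝ)^((1:ℝ)/(2*(M:ℝ))) :=
    mul_div_cancel_right₀ _ hρ.ne'
  have hstar : ‖(Ttheta M)ᵀ * SR M ρ ((2 : ℝ) ^ ((1 : ℝ) / (2 * M)) * ρ)‖ *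
      ‖((Ttheta M)ᵀ * SR M ρ ((2 : ℝ) ^ ((1 : ℝ) / (2 * M)) * ρ))⁻¹‖ =
      (2 : ℝ) ^ (((M : ℝ) - 1) / (2 * M)) := by
    rw [hSR, hxs]
    exact cond_eq_at M hM
  refine ⟨?_, hstar, ?_⟩
  · intro R₀ hR₀
    rw [hstar, hSR R₀]
    exact cond_ge M hM (R₀/ρ) (div_pos hR₀ hρ)
  · rw [Real.sqrt_eq_rpow]
    apply (Real.rpow_lt_rpow_left_iff (by norm_num : (1:ℝ) < 2)).mpr
    rw [div_lt_div_iff₀ (by positivity) (by norm_num)]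
    ring_nf
    linarith
end
end
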